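/- The uniformity of the Lebesgue null ideal is at least the covering number of the meager ideal of ℝ: the least cardinality of a subset of ℝ that is not Lebesgue null is greater than or equal to the least cardinality of a family of meager subsets of ℝ whose union is all of ℝ. -/
import Mathlib


open Cardinal Set MeasureTheory

/-- The uniformity of the Lebesgue null ideal: least cardinality of a non-null set of reals. -/
noncomputable def unifNull : Cardinal :=
  sInf {c : Cardinal | ∃ S : Set ℝ, MeasureTheory.volume S ≠ 0 ∧ c = #S}

/-- The covering number of the meager ideal of ℝ. -/
noncomputable def covMeagerReal : Cardinal :=
  sInf {c : Cardinal | ∃ F : Set (Set ℝ),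
    (∀ s ∈ F, IsMeagre s) ∧ ⋃₀ F = Set.univ ∧ c = #F}

/-- There is a null set of reals which is residual (comeager). -/
lemma exists_residual_null : ∃ U : Set ℝ, U ∈ residual ℝ ∧ MeasureTheory.volume U = 0 := by
  obtain ⟨U, hU, V, hV, hUV⟩ := Filter.disjoint_iff.1 Real.disjoint_residual_ae
  refine ⟨U, hU, ?_⟩
  have hVc : MeasureTheory.volume Vᶜ = 0 := hV
  have : U ⊆ Vᶜ := fun x hx hxV => Set.disjoint_left.1 hUV hx hxV
  exact measure_mono_null this hVc

theorem covMeagerReal_le_unifNull : covMeagerReal ≤ unifNull := by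
  have hne : {c : Cardinal | ∃ S : Set ℝ, MeasureTheory.volume S ≠ 0 ∧ c = #S}.Nonempty := by
    refine ⟨#(Set.univ : Set ℝ), Set.univ, ?_, rfl⟩
    simp [Real.volume_univ]
  refine le_csInf hne ?_
  rintro c ⟨S, hS, rfl⟩
  obtain ⟨U, hUres, hUnull⟩ := exists_residual_null
  set M : Set ℝ := Uᶜ with hM
  have hMmeagre : IsMeagre M := by
    rw [IsMeagre, hM, compl_compl]; exact hUres
  -- the family of translates of M indexed by S
  set F : Set (Set ℝ) := (fun s : ℝ => (· - s) ⁻¹' M) '' S with hF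
  have hFmeagre : ∀ t ∈ F, IsMeagre t := by
    rintro t ⟨s, _, rfl⟩
    exact hMmeagre.preimage_of_isOpenMap (continuous_sub_right s)
      (Homeomorph.subRight s).isOpenMap
  have hFcover : ⋃₀ F = Set.univ := by
    ext x
    simp only [Set.mem_sUnion, Set.mem_univ, iff_true, hF, Set.mem_image]
    by_contra hcon
    push_neg at hcon
    -- then x - s ∈ U for all s ∈ S, so S ⊆ (x - ·) ⁻¹' U which is null
    have hsub : S ⊆ (fun s => x - s) ⁻¹' U := by
      intro s hs
      have := hcon _ ⟨s, hs, rfl⟩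
      simp only [Set.mem_preimage, hM, Set.mem_compl_iff, not_not] at this ⊢
      exact this
    have hnull : MeasureTheory.volume ((fun s => x - s) ⁻¹' U) = 0 :=
      (Measure.measurePreserving_sub_left MeasureTheory.volume x).quasiMeasurePreserving.preimage_null
        hUnull
    exact hS (measure_mono_null hsub hnull)
  have hmem : #F ∈ {c : Cardinal | ∃ F : Set (Set ℝ),
      (∀ s ∈ F, IsMeagre s) ∧ ⋃₀ F = Set.univ ∧ c = #F} := ⟨F, hFmeagre, hFcover, rfl⟩
  calc covMeagerReal ≤ #F := csInf_le' hmem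
    _ ≤ #S := Cardinal.mk_image_le
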